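/- Let g:[0,T]→ℝ be (α(·)+ε)-variable-order Hölder with g(0)=0, α C^1 into [a,b]⊂(0,1), ε < 1−sup α, K(x,t) = Γ(α(t))(x−t)^{−α(t)}. Then for fixed x ∈ (0,T), lim_{h→0} (1/h) ∫_x^{x+h} K(x+h,t)(g(t)−g(x)) dt = 0. In particular this boundary term does not contribute to the derivative of x ↦ ∫_0^x K(x,t)g(t)dt. -/

import Mathlib

open Set Real MeasureTheory intervalIntegral Filter

/-- The boundary term in the differentiation of `x ↦ ∫_0^x K(x,t)g(t)dt`,
`K(x,t) = Γ(α(t))(x−t)^{−α(t)}`, vanishes: for `g ∈ C_0^{α(·)+ε}` with Hölder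
constant `N` and fixed `x ∈ (0,T)`,
`(1/h)∫_x^{x+h} K(x+h,t)(g(t)−g(x))dt → 0` as `h → 0⁺`. -/
theorem stmt_15 (T a b : ℝ) (hT : 0 < T) (ha : 0 < a) (hab : a ≤ b) (hb : b < 1)
    (α : ℝ → ℝ) (hα : ContDiff ℝ 1 α) (hαval : ∀ t ∈ Icc 0 T, α t ∈ Icc a b)
    (αsup : ℝ) (hαsup : IsLUB (α '' Icc 0 T) αsup)
    (ε : ℝ) (hε : 0 < ε) (hεb : ε < 1 - αsup)
    (g : ℝ → ℝ) (hg0 : g 0 = 0) (N : ℝ)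
    (hgH : ∀ x ∈ Icc 0 T, ∀ y ∈ Icc 0 T,
      |g x - g y| ≤ N * |x - y| ^ (max (α x) (α y) + ε))
    (x : ℝ) (hx : x ∈ Ioo (0:ℝ) T) :
    Tendsto (fun h : ℝ => (1 / h) *
        ∫ t in x..(x + h), Real.Gamma (α t) * (x + h - t) ^ (-(α t)) * (g t - g x))
      (nhdsWithin 0 (Ioi 0)) (nhds 0) := by
  obtain ⟨hx0, hxT⟩ := hx
  -- αsup ≤ b and a ≤ αsup
  have hαsup_le : αsup ≤ b := by
    refine hαsup.2 ?_
    rintro y ⟨t, ht, rfl⟩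
    exact (hαval t ht).2
  have ha_le : a ≤ αsup := by
    have h0 : α 0 ≤ αsup := hαsup.1 ⟨0, ⟨le_refl 0, hT.le⟩, rfl⟩
    have := (hαval 0 ⟨le_refl 0, hT.le⟩).1
    linarith
  have hαsup1 : αsup < 1 := lt_of_le_of_lt hαsup_le hb
  have h1m : 0 < 1 - αsup := by linarith
  -- Γ is bounded on [a, b]
  have hΓcont : ContinuousOn Real.Gamma (Icc a b) := by
    intro s hs
    have hs0 : 0 < s := lt_of_lt_of_le ha hs.1
    refine (Real.differentiableAt_Gamma (fun m => ?_)).continuousAt.continuousWithinAt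
    have : (-(m : ℝ)) < s := lt_of_le_of_lt (neg_nonpos.mpr (Nat.cast_nonneg m)) hs0
    exact this.ne'
  obtain ⟨z, hz, hzmax'⟩ := isCompact_Icc.exists_isMaxOn ⟨a, le_refl a, hab⟩ hΓcont
  have hzmax : ∀ y ∈ Icc a b, Real.Gamma y ≤ Real.Gamma z := fun y hy => hzmax' hy
  set M : ℝ := Real.Gamma z with hM
  have hM0 : 0 < M := Real.Gamma_pos_of_pos (lt_of_lt_of_le ha hz.1)
  set N' : ℝ := max N 0 with hN'
  have hN'0 : 0 ≤ N' := le_max_right N 0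
  set C : ℝ := M * N' / (1 - αsup) with hC
  have hC0 : 0 ≤ C := div_nonneg (mul_nonneg hM0.le hN'0) h1m.le
  set δ : ℝ := min 1 (T - x) with hδ
  have hδ0 : 0 < δ := lt_min one_pos (by linarith)
  -- key bound
  have key : ∀ h ∈ Ioo (0:ℝ) δ,
      ‖(1 / h) * ∫ t in x..(x + h),
          Real.Gamma (α t) * (x + h - t) ^ (-(α t)) * (g t - g x)‖ ≤ C * h ^ ε := by
    intro h hh
    obtain ⟨hh0, hhδ⟩ := hh
    have hh1 : h ≤ 1 := le_of_lt (lt_of_lt_of_le hhδ (min_le_left _ _))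
    have hhT : x + h ≤ T := by
      have := lt_of_lt_of_le hhδ (min_le_right _ _); linarith
    have hxh : x ≤ x + h := by linarith
    -- the bounding function
    set C0 : ℝ := M * N' * h ^ (αsup + ε) with hC0def
    have hC0nn : 0 ≤ C0 := by positivity
    have hGint : IntervalIntegrable (fun t => C0 * (x + h - t) ^ (-αsup))
        volume x (x + h) := by
      have hbase : IntervalIntegrable (fun s : ℝ => s ^ (-αsup)) volume 0 h :=
        intervalIntegrable_rpow' (by linarith)
      have := (hbase.comp_sub_left (x + h)).const_mul C0
      have h2 := this.symm
      simpa using h2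
    -- a.e. pointwise bound
    have hae : ∀ᵐ t ∂(volume.restrict (Set.uIoc x (x + h))),
        ‖Real.Gamma (α t) * (x + h - t) ^ (-(α t)) * (g t - g x)‖
          ≤ C0 * (x + h - t) ^ (-αsup) := by
      have hne : ∀ᵐ t ∂(volume.restrict (Set.uIoc x (x + h))), t ≠ x + h :=
        ae_restrict_of_ae (compl_mem_ae_iff.mpr (measure_singleton _))
      filter_upwards [ae_restrict_mem measurableSet_uIoc, hne] with t ht htne
      rw [uIoc_of_le hxh] at ht
      have htx : x < t := ht.1
      have hth : t < x + h := lt_of_le_of_ne ht.2 htne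
      have htT : t ∈ Icc (0:ℝ) T := ⟨by linarith, by linarith⟩
      have hAt : α t ∈ Icc a b := hαval t htT
      have hA0 : 0 < α t := lt_of_lt_of_le ha hAt.1
      have hAsup : α t ≤ αsup := hαsup.1 ⟨t, htT, rfl⟩
      have hu0 : 0 < x + h - t := by linarith
      have huh : x + h - t ≤ h := by linarith
      have hΓle : Real.Gamma (α t) ≤ M := hzmax (α t) hAt
      have hΓ0 : 0 < Real.Gamma (α t) := Real.Gamma_pos_of_pos hA0
      have hP0 : 0 ≤ (x + h - t) ^ (-(α t)) := rpow_nonneg hu0.le _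
      -- Hölder bound
      have hgb : |g t - g x| ≤ N' * h ^ (α t + ε) := by
        have h1 := hgH t htT x ⟨hx0.le, hxT.le⟩
        have habs : |t - x| = t - x := abs_of_pos (by linarith)
        have h2 : |t - x| ^ (max (α t) (α x) + ε) ≤ (t - x) ^ (α t + ε) := by
          rw [habs]
          exact Real.rpow_le_rpow_of_exponent_ge (by linarith) (by linarith)
            (by simp [add_le_add_iff_right, le_max_left])
        have h3 : (t - x) ^ (α t + ε) ≤ h ^ (α t + ε) :=
          Real.rpow_le_rpow (by linarith) (by linarith) (by positivity)
        calc |g t - g x| ≤ N * |t - x| ^ (max (α t) (α x) + ε) := h1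
          _ ≤ N' * |t - x| ^ (max (α t) (α x) + ε) := by
              apply mul_le_mul_of_nonneg_right (le_max_left N 0) (by positivity)
          _ ≤ N' * (t - x) ^ (α t + ε) := mul_le_mul_of_nonneg_left h2 hN'0
          _ ≤ N' * h ^ (α t + ε) := mul_le_mul_of_nonneg_left h3 hN'0
      -- exponent comparison
      have hexp : h ^ (α t + ε) * (x + h - t) ^ (-(α t))
          ≤ h ^ (αsup + ε) * (x + h - t) ^ (-αsup) := by
        have hdiv : (h / (x + h - t)) ^ (α t) ≤ (h / (x + h - t)) ^ αsup :=
          Real.rpow_le_rpow_of_exponent_le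
            ((one_le_div hu0).mpr huh) hAsup
        rw [Real.div_rpow hh0.le hu0.le, Real.div_rpow hh0.le hu0.le] at hdiv
        rw [Real.rpow_add hh0, Real.rpow_add hh0, Real.rpow_neg hu0.le,
          Real.rpow_neg hu0.le]
        calc h ^ (α t) * h ^ ε * ((x + h - t) ^ (α t))⁻¹
            = (h ^ (α t) / (x + h - t) ^ (α t)) * h ^ ε := by ring
          _ ≤ (h ^ αsup / (x + h - t) ^ αsup) * h ^ ε := by
              apply mul_le_mul_of_nonneg_right hdiv (by positivity)
          _ = h ^ αsup * h ^ ε * ((x + h - t) ^ αsup)⁻¹ := by ring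
      calc ‖Real.Gamma (α t) * (x + h - t) ^ (-(α t)) * (g t - g x)‖
          = Real.Gamma (α t) * (x + h - t) ^ (-(α t)) * |g t - g x| := by
            rw [Real.norm_eq_abs, abs_mul, abs_mul, abs_of_pos hΓ0, abs_of_nonneg hP0]
        _ ≤ M * (x + h - t) ^ (-(α t)) * (N' * h ^ (α t + ε)) := by
            apply mul_le_mul (mul_le_mul_of_nonneg_right hΓle hP0) hgb
              (abs_nonneg _) (mul_nonneg hM0.le hP0)
        _ = (M * N') * (h ^ (α t + ε) * (x + h - t) ^ (-(α t))) := by ring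
        _ ≤ (M * N') * (h ^ (αsup + ε) * (x + h - t) ^ (-αsup)) := by
            apply mul_le_mul_of_nonneg_left hexp (mul_nonneg hM0.le hN'0)
        _ = C0 * (x + h - t) ^ (-αsup) := by rw [hC0def]; ring
    have hbound := intervalIntegral.norm_integral_le_abs_of_norm_le hae hGint
    -- compute the bounding integral
    have hint : (∫ t in x..(x + h), (x + h - t) ^ (-αsup))
        = h ^ (1 - αsup) / (1 - αsup) := by
      have h1 : (∫ t in x..(x + h), (x + h - t) ^ (-αsup))
          = ∫ s in ((x+h) - (x+h))..((x+h) - x), s ^ (-αsup) :=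
        intervalIntegral.integral_comp_sub_left (fun s => s ^ (-αsup)) (x + h)
      rw [h1]
      have h2 : (x + h) - (x + h) = (0:ℝ) := by ring
      have h3 : (x + h) - x = h := by ring
      rw [h2, h3, integral_rpow (Or.inl (by linarith))]
      rw [Real.zero_rpow (by linarith : -αsup + 1 ≠ 0)]
      ring_nf
    have habsint : |∫ t in x..(x + h), C0 * (x + h - t) ^ (-αsup)|
        = C0 * (h ^ (1 - αsup) / (1 - αsup)) := by
      rw [intervalIntegral.integral_const_mul, hint]
      exact abs_of_nonneg (by positivity)
    rw [habsint] at hbound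
    have hfin : C0 * (h ^ (1 - αsup) / (1 - αsup)) = C * h ^ ε * h := by
      rw [hC0def, hC]
      have : h ^ (αsup + ε) * h ^ (1 - αsup) = h * h ^ ε := by
        rw [← Real.rpow_add hh0]
        have : αsup + ε + (1 - αsup) = 1 + ε := by ring
        rw [this, Real.rpow_add hh0, Real.rpow_one]
      field_simp
      linear_combination N' * this
    rw [hfin] at hbound
    rw [norm_mul, Real.norm_eq_abs, Real.norm_eq_abs, abs_of_pos (by positivity :
      (0:ℝ) < 1 / h)]
    calc (1 / h) * |∫ t in x..(x + h),
          Real.Gamma (α t) * (x + h - t) ^ (-(α t)) * (g t - g x)|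
        ≤ (1 / h) * (C * h ^ ε * h) := by
          apply mul_le_mul_of_nonneg_left _ (by positivity)
          simpa using hbound
      _ = C * h ^ ε := by field_simp
  -- squeeze
  have hev : ∀ᶠ h in nhdsWithin (0:ℝ) (Ioi 0),
      ‖(1 / h) * ∫ t in x..(x + h),
          Real.Gamma (α t) * (x + h - t) ^ (-(α t)) * (g t - g x)‖ ≤ C * h ^ ε := by
    filter_upwards [Ioo_mem_nhdsGT_of_mem ⟨le_refl 0, hδ0⟩] with h hh
    exact key h hh
  have hlim : Tendsto (fun h : ℝ => C * h ^ ε) (nhdsWithin 0 (Ioi 0)) (nhds 0) := by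
    have h1 : ContinuousAt (fun h : ℝ => h ^ ε) 0 :=
      Real.continuousAt_rpow_const 0 ε (Or.inr hε.le)
    have h2 : Tendsto (fun h : ℝ => C * h ^ ε) (nhds 0) (nhds (C * (0:ℝ) ^ ε)) :=
      (h1.tendsto.const_mul C)
    rw [Real.zero_rpow hε.ne', mul_zero] at h2
    exact h2.mono_left nhdsWithin_le_nhds
  exact squeeze_zero_norm' hev hlim
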